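/- Let t ≥ 4 be an integer, set r = ⌈t/3⌉ and s = t². Let T be a copy of T^s, the complete tripartite 3-graph with parts V₁, V₂, V₃ each of size s, and for every i ∈ [3] let K_i be a copy of K̃_r with V(K_i) ⊆ V_i. Then the 3-graph T ∪ K₁ ∪ K₂ ∪ K₃ contains a copy of K̃_{3r}. -/
import Mathlib


open Finset Filter

attribute [local instance] Classical.propDecidable

/-- A hypergraph: a finite vertex set and a finite edge set (edges are finite
vertex sets; for 3-graphs all edges have three elements). -/
structure H3 where
  verts : Finset ℕ
  edges : Finset (Finset ℕ)

/-- The subhypergraph relation. -/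
def H3.Sub (F H : H3) : Prop :=
  F.verts ⊆ H.verts ∧ F.edges ⊆ H.edges ∧ ∀ e ∈ F.edges, e ⊆ F.verts

/-- The density `d₃` of a 3-graph. -/
noncomputable def d3 (F : H3) : ℝ :=
  if F.edges.card = 0 then 0
  else if F.edges.card = 1 ∧ F.verts.card = 3 then 1 / 3
  else ((F.edges.card : ℝ) - 1) / ((F.verts.card : ℝ) - 3)

/-- The maximal 3-density `m₃`. -/
noncomputable def m3 (H : H3) : ℝ :=
  sSup {x : ℝ | ∃ F : H3, F.Sub H ∧ x = d3 F}

/-- The asymmetric maximal 3-density `m₃(H₁,H₂)`. -/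
noncomputable def m3Asym (H1 H2 : H3) : ℝ :=
  sSup {x : ℝ | ∃ F : H3, F.Sub H1 ∧ 1 ≤ F.edges.card ∧
    x = (F.edges.card : ℝ) / ((F.verts.card : ℝ) - 3 + 1 / m3 H2)}

/-- The maximum subhypergraph density `m(H)`. -/
noncomputable def mDen (H : H3) : ℝ :=
  sSup {x : ℝ | ∃ F : H3, F.Sub H ∧ 1 ≤ F.verts.card ∧
    x = (F.edges.card : ℝ) / (F.verts.card : ℝ)}

/-- The canonical linear 3-clique `K̃_t`: branch vertices `0,…,t-1`; the pair
`(i,j)` with `i<j<t` gets the apex vertex `t + (C(j,2) + i)`, and the map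
`(i,j) ↦ C(j,2) + i` is a bijection onto `[0, C(t,2))`. -/
noncomputable def linClique (t : ℕ) : H3 where
  verts := Finset.range (t + t.choose 2)
  edges := ((Finset.range t ×ˢ Finset.range t).filter fun p => p.1 < p.2).image
    fun p => {p.1, p.2, t + (p.2.choose 2 + p.1)}

/-- `v(K̃_t)`. -/
def vOf (t : ℕ) : ℕ := t + t.choose 2

/-- `(cV, cE)` is a copy of the hypergraph `F` (an isomorphic image of `F`). -/
def IsCopy3 (F : H3) (cV : Finset ℕ) (cE : Finset (Finset ℕ)) : Prop :=
  ∃ φ : ℕ → ℕ, Set.InjOn φ ↑F.verts ∧ cV = F.verts.image φ ∧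
    cE = F.edges.image fun e => e.image φ

/-- The edge set `E` contains a copy of the hypergraph `F`. -/
def ContainsCopy (F : H3) (E : Finset (Finset ℕ)) : Prop :=
  ∃ cV cE, IsCopy3 F cV cE ∧ cE ⊆ E

/-- The edge set `E` induced on `U` contains a copy of the hypergraph `F`. -/
def ContainsCopyWithin (F : H3) (E : Finset (Finset ℕ)) (U : Finset ℕ) : Prop :=
  ∃ cV cE, IsCopy3 F cV cE ∧ cV ⊆ U ∧ cE ⊆ E

/-- The probability that the binomial random 3-graph `ℍ(n,p)` satisfies `P`. -/
noncomputable def PrH (n : ℕ) (p : ℝ) (P : Finset (Finset ℕ) → Prop) : ℝ :=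
  ∑ R ∈ ((Finset.range n).powersetCard 3).powerset,
    if P R then p ^ R.card * (1 - p) ^ (((Finset.range n).powersetCard 3).card - R.card)
    else 0

/-- `E → (F)₂` : every 2-colouring of `E` yields a monochromatic copy of `F`. -/
def Arrow2 (E : Finset (Finset ℕ)) (F : H3) : Prop :=
  ∀ χ : Finset ℕ → Bool, ∃ c : Bool, ContainsCopy F (E.filter fun e => χ e = c)

/-- `E → (F, F')` : every red/blue colouring of `E` yields a red copy of `F`
or a blue copy of `F'`. -/
def ArrowAsym (E : Finset (Finset ℕ)) (F F' : H3) : Prop :=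
  ∀ χ : Finset ℕ → Bool,
    ContainsCopy F (E.filter fun e => χ e = true) ∨
    ContainsCopy F' (E.filter fun e => χ e = false)

/-- `H` is `(F,F')`-Ramsey with respect to `(𝓕,𝓕')`. -/
def RamseyWrt (E : Finset (Finset ℕ)) (F F' : H3) (𝓕 𝓕' : Finset (Finset ℕ)) : Prop :=
  ∀ χ : Finset ℕ → Bool,
    (∃ cV cE, IsCopy3 F cV cE ∧ cE ⊆ E.filter (fun e => χ e = true) ∧ cV ∉ 𝓕) ∨
    (∃ cV cE, IsCopy3 F' cV cE ∧ cE ⊆ E.filter (fun e => χ e = false) ∧ cV ∉ 𝓕')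

/-- The complete bipartite graph between `X` and `Y`, as a set of pairs. -/
noncomputable def K2 (X Y : Finset ℕ) : Finset (Finset ℕ) :=
  (X ×ˢ Y).image fun p => ({p.1, p.2} : Finset ℕ)

/-- `e_G(X,Y)` : the number of edges of `G` with one endpoint in `X` and one in `Y`. -/
noncomputable def e2 (G : Finset (Finset ℕ)) (X Y : Finset ℕ) : ℕ :=
  (G.filter fun e => ∃ x ∈ X, ∃ y ∈ Y, e = {x, y}).card

/-- The graph `G` is `(δ,d)`-regular between `X` and `Y`. -/
def BipRegular (δ d : ℝ) (G : Finset (Finset ℕ)) (X Y : Finset ℕ) : Prop :=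
  ∀ X' ⊆ X, ∀ Y' ⊆ Y,
    |(e2 G X' Y' : ℝ) - d * X'.card * Y'.card| ≤ δ * X.card * Y.card

/-- `e_H(X,Y,Z)` : the number of edges of the 3-graph `E` meeting `X`, `Y` and `Z`. -/
noncomputable def e3 (E : Finset (Finset ℕ)) (X Y Z : Finset ℕ) : ℕ :=
  (E.filter fun e => ∃ x ∈ X, ∃ y ∈ Y, ∃ z ∈ Z, e = {x, y, z}).card

/-- The 3-graph `E` is `(δ,d)`-weakly-regular on `(X,Y,Z)`. -/
def WeakRegularWith (δ d : ℝ) (E : Finset (Finset ℕ)) (X Y Z : Finset ℕ) : Prop :=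
  ∀ X' ⊆ X, ∀ Y' ⊆ Y, ∀ Z' ⊆ Z,
    |(e3 E X' Y' Z' : ℝ) - d * X'.card * Y'.card * Z'.card| ≤
      δ * X.card * Y.card * Z.card

/-- The 3-graph `E` is `δ`-weakly-regular on `(X,Y,Z)`. -/
def WeakRegular (δ : ℝ) (E : Finset (Finset ℕ)) (X Y Z : Finset ℕ) : Prop :=
  WeakRegularWith δ ((e3 E X Y Z : ℝ) / (X.card * Y.card * Z.card)) E X Y Z

/-- The 3-graph `E` is `δ`-weakly-regular with respect to the vertex partition `V`. -/
def WeakRegWrt (δ : ℝ) (E : Finset (Finset ℕ)) {t : ℕ} (V : Fin t → Finset ℕ) : Prop :=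
  let bad : Finset (Fin t × Fin t × Fin t) :=
    Finset.univ.filter fun x =>
      x.1 < x.2.1 ∧ x.2.1 < x.2.2 ∧ ¬ WeakRegular δ E (V x.1) (V x.2.1) (V x.2.2)
  (bad.card : ℝ) ≤ δ * (t.choose 3)

/-- `K_3(G)` on parts `(X,Y,Z)` : the triangles of `G` with one vertex in each part,
as a set of vertex triples. -/
noncomputable def triSets (G : Finset (Finset ℕ)) (X Y Z : Finset ℕ) : Finset (Finset ℕ) :=
  ((X ×ˢ Y ×ˢ Z).filter fun p =>
      ({p.1, p.2.1} : Finset ℕ) ∈ G ∧ ({p.1, p.2.2} : Finset ℕ) ∈ G ∧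
        ({p.2.1, p.2.2} : Finset ℕ) ∈ G).image fun p => ({p.1, p.2.1, p.2.2} : Finset ℕ)

/-- The relative density `d(E|P)` of a 3-graph `E` with respect to the tripartite
graph `P` on parts `(X,Y,Z)`. -/
noncomputable def relDen (E P : Finset (Finset ℕ)) (X Y Z : Finset ℕ) : ℝ :=
  ((E ∩ triSets P X Y Z).card : ℝ) / ((triSets P X Y Z).card : ℝ)

/-- The 3-graph `E` is `(δ,d,r)`-regular with respect to the tripartite graph `P`
on parts `(X,Y,Z)`. -/
def StrongRegular (δ d : ℝ) (r : ℕ) (E P : Finset (Finset ℕ)) (X Y Z : Finset ℕ) : Prop :=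
  ∀ Q : Fin r → Finset (Finset ℕ), (∀ i, Q i ⊆ P) →
    δ * ((triSets P X Y Z).card : ℝ)
        ≤ (((Finset.univ : Finset (Fin r)).biUnion fun i => triSets (Q i) X Y Z).card : ℝ) →
    0 < δ * ((triSets P X Y Z).card : ℝ) →
    |((E ∩ ((Finset.univ : Finset (Fin r)).biUnion fun i => triSets (Q i) X Y Z)).card : ℝ)
        - d * (((Finset.univ : Finset (Fin r)).biUnion fun i => triSets (Q i) X Y Z).card : ℝ)|
      ≤ δ * ((triSets P X Y Z).card : ℝ)

/-- The triad `B^{ijk}_{αβγ}` of a family of bipartite graphs. -/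
def triadG {t ℓ : ℕ} (B : Fin t → Fin t → Fin ℓ → Finset (Finset ℕ))
    (i j k : Fin t) (α β γ : Fin ℓ) : Finset (Finset ℕ) :=
  B i j α ∪ B i k β ∪ B j k γ

/-- The 3-graph `E` is `(δ,r)`-regular with respect to the partition `B` of the
pairs crossing the vertex partition `V` of `[n]`. -/
def StrongRegWrtB (δ : ℝ) (r : ℕ) (E : Finset (Finset ℕ)) {t ℓ : ℕ}
    (V : Fin t → Finset ℕ) (B : Fin t → Fin t → Fin ℓ → Finset (Finset ℕ)) (n : ℕ) : Prop :=
  let bad : Finset ((Fin t × Fin t × Fin t) × Fin ℓ × Fin ℓ × Fin ℓ) :=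
    Finset.univ.filter fun x =>
      x.1.1 < x.1.2.1 ∧ x.1.2.1 < x.1.2.2 ∧
        ¬ StrongRegular δ
          (relDen E (triadG B x.1.1 x.1.2.1 x.1.2.2 x.2.1 x.2.2.1 x.2.2.2)
            (V x.1.1) (V x.1.2.1) (V x.1.2.2))
          r E (triadG B x.1.1 x.1.2.1 x.1.2.2 x.2.1 x.2.2.1 x.2.2.2)
          (V x.1.1) (V x.1.2.1) (V x.1.2.2)
  ((bad.biUnion fun x =>
      triSets (triadG B x.1.1 x.1.2.1 x.1.2.2 x.2.1 x.2.2.1 x.2.2.2)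
        (V x.1.1) (V x.1.2.1) (V x.1.2.2)).card : ℝ) ≤ δ * (n : ℝ) ^ 3

/-- The joint link graph `⋂_{j} L_H(x_j, P)` of a tuple `x`, supported on the
bipartite part of `P` between `Y` and `Z`. -/
noncomputable def jointLink (EH P : Finset (Finset ℕ)) (Y Z : Finset ℕ) {t : ℕ}
    (x : Fin t → ℕ) : Finset (Finset ℕ) :=
  P.filter fun e => (∃ y ∈ Y, ∃ z ∈ Z, e = {y, z}) ∧ ∀ j : Fin t, insert (x j) e ∈ EH

/-- The joint link graph `L_H(X) = ⋂_{x ∈ X} L_H(x)` of a set `X` of vertices of a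
3-graph on `[n]`. -/
noncomputable def jointLinkSet (n : ℕ) (E : Finset (Finset ℕ)) (X : Finset ℕ) :
    Finset (Finset ℕ) :=
  ((Finset.range n).powersetCard 2).filter fun q => ∀ x ∈ X, insert x q ∈ E

/-- The complete tripartite 3-graph on parts `V1`, `V2`, `V3`. -/
noncomputable def tripartiteEdges (V1 V2 V3 : Finset ℕ) : Finset (Finset ℕ) :=
  (V1 ×ˢ V2 ×ˢ V3).image fun p => ({p.1, p.2.1, p.2.2} : Finset ℕ)

/-- The minimum 1-degree `δ₁` of a 3-graph on `[n]`. -/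
noncomputable def minDeg1 (n : ℕ) (E : Finset (Finset ℕ)) : ℕ :=
  if h : ((Finset.range n).image fun v => (E.filter fun e => v ∈ e).card).Nonempty then
    ((Finset.range n).image fun v => (E.filter fun e => v ∈ e).card).min' h
  else 0

/-- `(cV, cE)` is a copy of the graph `(KV, KE)` (an isomorphic image). -/
def IsCopy2 (KV : Finset ℕ) (KE : Finset (Finset ℕ))
    (cV : Finset ℕ) (cE : Finset (Finset ℕ)) : Prop :=
  ∃ φ : ℕ → ℕ, Set.InjOn φ ↑KV ∧ cV = KV.image φ ∧ cE = KE.image fun e => e.image φ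


lemma aux_choose_two_succ (j : ℕ) : (j+1).choose 2 = j.choose 2 + j := by
  rw [Nat.choose_succ_succ, Nat.choose_one_right, Nat.add_comm]

lemma aux_choose_two_mono {a b : ℕ} (h : a ≤ b) : a.choose 2 ≤ b.choose 2 :=
  Nat.choose_le_choose 2 h

lemma aux_decJ_ex (m : ℕ) : ∃ j, m < (j+1).choose 2 := by
  refine ⟨m+1, ?_⟩
  rw [aux_choose_two_succ]
  have : 1 ≤ (m+1).choose 2 + 1 := by omega
  omega

noncomputable def decJ (m : ℕ) : ℕ := Nat.find (aux_decJ_ex m)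

lemma decJ_lt (m : ℕ) : m < (decJ m + 1).choose 2 := Nat.find_spec (aux_decJ_ex m)

lemma decJ_le (m : ℕ) : (decJ m).choose 2 ≤ m := by
  rcases Nat.eq_zero_or_pos (decJ m) with h | h
  · simp [h]
  · have h2 := Nat.find_min (aux_decJ_ex m) (Nat.sub_lt h Nat.one_pos)
    push_neg at h2
    rw [show Nat.find (aux_decJ_ex m) = decJ m from rfl] at h2
    have h3 : decJ m - 1 + 1 = decJ m := by omega
    rwa [h3] at h2

lemma decJ_encode {i j : ℕ} (h : i < j) : decJ (j.choose 2 + i) = j := by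
  set m := j.choose 2 + i with hm
  have hs := aux_choose_two_succ j
  have h1 : m < (j+1).choose 2 := by omega
  have hle : decJ m ≤ j := Nat.find_min' _ h1
  have hge : j ≤ decJ m := by
    by_contra hc
    push_neg at hc
    have h4 : (decJ m + 1).choose 2 ≤ j.choose 2 := aux_choose_two_mono (by omega)
    have h5 := decJ_lt m
    omega
  omega

/-- pair-in-base-r encoding is injective -/
lemma aux_base_inj {r a b a' b' : ℕ} (hb : b < r) (hb' : b' < r)
    (h : a * r + b = a' * r + b') : a = a' ∧ b = b' := by
  have hr : 0 < r := by omega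
  have h1 : (a * r + b) / r = a := by
    rw [Nat.mul_comm, Nat.mul_add_div hr, Nat.div_eq_of_lt hb]; omega
  have h2 : (a' * r + b') / r = a' := by
    rw [Nat.mul_comm, Nat.mul_add_div hr, Nat.div_eq_of_lt hb']; omega
  constructor
  · rw [← h1, ← h2, h]
  · have h3 : a = a' := by rw [← h1, ← h2, h]
    rw [h3] at h; omega

lemma aux_base_mod {r a b : ℕ} (hb : b < r) : (a * r + b) % r = b := by
  rw [Nat.mul_comm, Nat.mul_add_mod, Nat.mod_eq_of_lt hb]

lemma aux_base_div {r a b : ℕ} (hb : b < r) : (a * r + b) / r = a := by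
  have hr : 0 < r := by omega
  rw [Nat.mul_comm, Nat.mul_add_div hr, Nat.div_eq_of_lt hb]; omega

/-- The embedding of `linClique (3r)` built from embeddings of the three small
cliques and three "fresh apex" maps. -/
noncomputable def auxPhi (r : ℕ) (g1 g2 g3 f1 f2 f3 : ℕ → ℕ) : ℕ → ℕ := fun v =>
  if v < r then g1 v
  else if v < 2*r then g2 (v - r)
  else if v < 3*r then g3 (v - 2*r)
  else
    let m := v - 3*r
    let j := decJ m
    let i := m - j.choose 2
    if j < r then g1 (r + m)
    else if j < 2*r then
      if i < r then f3 (i * r + (j - r))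
      else g2 (r + ((j - r).choose 2 + (i - r)))
    else
      if i < r then f2 (i * r + (j - 2*r))
      else if i < 2*r then f1 ((i - r) * r + (j - 2*r))
      else g3 (r + ((j - 2*r).choose 2 + (i - 2*r)))

section
variable (r : ℕ) (g1 g2 g3 f1 f2 f3 : ℕ → ℕ)

lemma auxPhi_b1 {v : ℕ} (h : v < r) : auxPhi r g1 g2 g3 f1 f2 f3 v = g1 v := by
  simp [auxPhi, h]

lemma auxPhi_b2 {v : ℕ} (h1 : r ≤ v) (h2 : v < 2*r) :
    auxPhi r g1 g2 g3 f1 f2 f3 v = g2 (v - r) := by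
  simp only [auxPhi]
  rw [if_neg (by omega), if_pos h2]

lemma auxPhi_b3 {v : ℕ} (h1 : 2*r ≤ v) (h2 : v < 3*r) :
    auxPhi r g1 g2 g3 f1 f2 f3 v = g3 (v - 2*r) := by
  simp only [auxPhi]
  rw [if_neg (by omega), if_neg (by omega), if_pos h2]

lemma auxPhi_apex {i j : ℕ} (hij : i < j) :
    auxPhi r g1 g2 g3 f1 f2 f3 (3*r + (j.choose 2 + i)) =
      (if j < r then g1 (r + (j.choose 2 + i))
       else if j < 2*r then
         if i < r then f3 (i * r + (j - r))
         else g2 (r + ((j - r).choose 2 + (i - r)))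
       else
         if i < r then f2 (i * r + (j - 2*r))
         else if i < 2*r then f1 ((i - r) * r + (j - 2*r))
         else g3 (r + ((j - 2*r).choose 2 + (i - 2*r)))) := by
  simp only [auxPhi]
  rw [if_neg (by omega), if_neg (by omega), if_neg (by omega)]
  have hm : 3*r + (j.choose 2 + i) - 3*r = j.choose 2 + i := by omega
  simp only [hm, decJ_encode hij]
  have hi : j.choose 2 + i - j.choose 2 = i := by omega
  simp only [hi]
end

/-- A copy of `T^s` (`s = t²`) together with copies of `K̃_r`
(`r = ⌈t/3⌉`) inside each of its parts contains a copy of `K̃_{3r}`. -/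
theorem linear_clique_in_tripartite_union (t : ℕ) (ht : 4 ≤ t)
    (V1 V2 V3 : Finset ℕ)
    (hd12 : Disjoint V1 V2) (hd13 : Disjoint V1 V3) (hd23 : Disjoint V2 V3)
    (hc1 : V1.card = t ^ 2) (hc2 : V2.card = t ^ 2) (hc3 : V3.card = t ^ 2)
    (cV1 cV2 cV3 : Finset ℕ) (cE1 cE2 cE3 : Finset (Finset ℕ))
    (h1 : IsCopy3 (linClique ((t + 2) / 3)) cV1 cE1) (hs1 : cV1 ⊆ V1)
    (h2 : IsCopy3 (linClique ((t + 2) / 3)) cV2 cE2) (hs2 : cV2 ⊆ V2)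
    (h3 : IsCopy3 (linClique ((t + 2) / 3)) cV3 cE3) (hs3 : cV3 ⊆ V3) :
    ContainsCopy (linClique (3 * ((t + 2) / 3)))
      (tripartiteEdges V1 V2 V3 ∪ cE1 ∪ cE2 ∪ cE3) := by
  classical
  set r := (t + 2) / 3 with hrdef
  obtain ⟨g1, hinj1, hV1c, hE1c⟩ := h1
  obtain ⟨g2, hinj2, hV2c, hE2c⟩ := h2
  obtain ⟨g3, hinj3, hV3c, hE3c⟩ := h3
  have hr2 : 2 ≤ r := by omega
  have hch : r.choose 2 ≤ r * r := by
    rw [Nat.choose_two_right]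
    calc r * (r - 1) / 2 ≤ r * (r - 1) := Nat.div_le_self _ _
      _ ≤ r * r := Nat.mul_le_mul_left _ (by omega)
  have hcb : (r + r.choose 2) + r * r ≤ t ^ 2 := by
    have h2 : 3 * r ≤ t + 2 := by omega
    have h5 : t ^ 2 = t * t := sq t
    nlinarith
  have hvertsr : (linClique r).verts = Finset.range (r + r.choose 2) := rfl
  have hcV1card : cV1.card = r + r.choose 2 := by
    rw [hV1c, Finset.card_image_of_injOn hinj1, hvertsr, Finset.card_range]
  have hcV2card : cV2.card = r + r.choose 2 := by
    rw [hV2c, Finset.card_image_of_injOn hinj2, hvertsr, Finset.card_range]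
  have hcV3card : cV3.card = r + r.choose 2 := by
    rw [hV3c, Finset.card_image_of_injOn hinj3, hvertsr, Finset.card_range]
  have hW1le : r * r ≤ (V1 \ cV1).card := by
    rw [Finset.card_sdiff_of_subset hs1, hcV1card, hc1]; omega
  have hW2le : r * r ≤ (V2 \ cV2).card := by
    rw [Finset.card_sdiff_of_subset hs2, hcV2card, hc2]; omega
  have hW3le : r * r ≤ (V3 \ cV3).card := by
    rw [Finset.card_sdiff_of_subset hs3, hcV3card, hc3]; omega
  obtain ⟨W1, hW1s, hW1c⟩ := Finset.exists_subset_card_eq hW1le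
  obtain ⟨W2, hW2s, hW2c⟩ := Finset.exists_subset_card_eq hW2le
  obtain ⟨W3, hW3s, hW3c⟩ := Finset.exists_subset_card_eq hW3le
  set f1 : ℕ → ℕ := fun a => if h : a < r * r then W1.orderEmbOfFin hW1c ⟨a, h⟩ else 0 with hf1
  set f2 : ℕ → ℕ := fun a => if h : a < r * r then W2.orderEmbOfFin hW2c ⟨a, h⟩ else 0 with hf2
  set f3 : ℕ → ℕ := fun a => if h : a < r * r then W3.orderEmbOfFin hW3c ⟨a, h⟩ else 0 with hf3
  have hF1sd : ∀ a, a < r * r → f1 a ∈ V1 \ cV1 := by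
    intro a ha
    simp only [hf1, dif_pos ha]
    exact hW1s (W1.orderEmbOfFin_mem hW1c ⟨a, ha⟩)
  have hF2sd : ∀ a, a < r * r → f2 a ∈ V2 \ cV2 := by
    intro a ha
    simp only [hf2, dif_pos ha]
    exact hW2s (W2.orderEmbOfFin_mem hW2c ⟨a, ha⟩)
  have hF3sd : ∀ a, a < r * r → f3 a ∈ V3 \ cV3 := by
    intro a ha
    simp only [hf3, dif_pos ha]
    exact hW3s (W3.orderEmbOfFin_mem hW3c ⟨a, ha⟩)
  have hF1inj : ∀ a, a < r * r → ∀ b, b < r * r → f1 a = f1 b → a = b := by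
    intro a ha b hb h
    simp only [hf1, dif_pos ha, dif_pos hb] at h
    exact congrArg Fin.val ((W1.orderEmbOfFin hW1c).injective h)
  have hF2inj : ∀ a, a < r * r → ∀ b, b < r * r → f2 a = f2 b → a = b := by
    intro a ha b hb h
    simp only [hf2, dif_pos ha, dif_pos hb] at h
    exact congrArg Fin.val ((W2.orderEmbOfFin hW2c).injective h)
  have hF3inj : ∀ a, a < r * r → ∀ b, b < r * r → f3 a = f3 b → a = b := by
    intro a ha b hb h
    simp only [hf3, dif_pos ha, dif_pos hb] at h
    exact congrArg Fin.val ((W3.orderEmbOfFin hW3c).injective h)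
  have hG1 : ∀ a, a < r + r.choose 2 → g1 a ∈ cV1 := by
    intro a ha
    rw [hV1c]
    exact Finset.mem_image_of_mem _ (by rw [hvertsr, Finset.mem_range]; omega)
  have hG2 : ∀ a, a < r + r.choose 2 → g2 a ∈ cV2 := by
    intro a ha
    rw [hV2c]
    exact Finset.mem_image_of_mem _ (by rw [hvertsr, Finset.mem_range]; omega)
  have hG3 : ∀ a, a < r + r.choose 2 → g3 a ∈ cV3 := by
    intro a ha
    rw [hV3c]
    exact Finset.mem_image_of_mem _ (by rw [hvertsr, Finset.mem_range]; omega)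
  have hGV1 : ∀ a, a < r + r.choose 2 → g1 a ∈ V1 := fun a ha => hs1 (hG1 a ha)
  have hGV2 : ∀ a, a < r + r.choose 2 → g2 a ∈ V2 := fun a ha => hs2 (hG2 a ha)
  have hGV3 : ∀ a, a < r + r.choose 2 → g3 a ∈ V3 := fun a ha => hs3 (hG3 a ha)
  have hFV1 : ∀ a, a < r * r → f1 a ∈ V1 := fun a ha => (Finset.mem_sdiff.mp (hF1sd a ha)).1
  have hFV2 : ∀ a, a < r * r → f2 a ∈ V2 := fun a ha => (Finset.mem_sdiff.mp (hF2sd a ha)).1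
  have hFV3 : ∀ a, a < r * r → f3 a ∈ V3 := fun a ha => (Finset.mem_sdiff.mp (hF3sd a ha)).1
  have hF1n : ∀ a, a < r * r → f1 a ∉ cV1 := fun a ha => (Finset.mem_sdiff.mp (hF1sd a ha)).2
  have hF2n : ∀ a, a < r * r → f2 a ∉ cV2 := fun a ha => (Finset.mem_sdiff.mp (hF2sd a ha)).2
  have hF3n : ∀ a, a < r * r → f3 a ∉ cV3 := fun a ha => (Finset.mem_sdiff.mp (hF3sd a ha)).2
  have hmv : ∀ a, a < r + r.choose 2 → a ∈ (↑(linClique r).verts : Set ℕ) := by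
    intro a ha
    simp only [hvertsr, Finset.coe_range, Set.mem_Iio]
    omega
  have hbound : ∀ x y : ℕ, x < r → y < r → x * r + y < r * r := by
    intro x y hx hy
    calc x * r + y < x * r + r := by omega
      _ = (x + 1) * r := by ring
      _ ≤ r * r := Nat.mul_le_mul_right r (by omega)
  set φ := auxPhi r g1 g2 g3 f1 f2 f3 with hφ
  have key : ∀ w, w < 3 * r + (3 * r).choose 2 →
      (∃ a, a < r + r.choose 2 ∧ φ w = g1 a ∧
        w = (if a < r then a else 3 * r + (a - r))) ∨
      (∃ a, a < r + r.choose 2 ∧ φ w = g2 a ∧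
        w = (if a < r then r + a else
          3 * r + ((decJ (a - r) + r).choose 2 + (a - r - (decJ (a - r)).choose 2 + r)))) ∨
      (∃ a, a < r + r.choose 2 ∧ φ w = g3 a ∧
        w = (if a < r then 2 * r + a else
          3 * r + ((decJ (a - r) + 2 * r).choose 2 + (a - r - (decJ (a - r)).choose 2 + 2 * r)))) ∨
      (∃ a, a < r * r ∧ φ w = f1 a ∧
        w = 3 * r + ((2 * r + a % r).choose 2 + (r + a / r))) ∨
      (∃ a, a < r * r ∧ φ w = f2 a ∧
        w = 3 * r + ((2 * r + a % r).choose 2 + a / r)) ∨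
      (∃ a, a < r * r ∧ φ w = f3 a ∧
        w = 3 * r + ((r + a % r).choose 2 + a / r)) := by
    intro w hw
    by_cases hw1 : w < r
    · exact Or.inl ⟨w, by omega,
        by rw [hφ]; exact auxPhi_b1 _ _ _ _ _ _ _ hw1, by rw [if_pos hw1]⟩
    · by_cases hw2 : w < 2 * r
      · refine Or.inr (Or.inl ⟨w - r, by omega,
          by rw [hφ]; exact auxPhi_b2 _ _ _ _ _ _ _ (by omega) hw2, ?_⟩)
        rw [if_pos (by omega)]
        omega
      · by_cases hw3 : w < 3 * r
        · refine Or.inr (Or.inr (Or.inl ⟨w - 2 * r, by omega,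
            by rw [hφ]; exact auxPhi_b3 _ _ _ _ _ _ _ (by omega) hw3, ?_⟩))
          rw [if_pos (by omega)]
          omega
        · have hm : w - 3 * r < (3 * r).choose 2 := by omega
          have hj1 := decJ_le (w - 3 * r)
          have hj2 := decJ_lt (w - 3 * r)
          set j := decJ (w - 3 * r) with hjd
          have hcs := aux_choose_two_succ j
          set i := w - 3 * r - j.choose 2 with hid
          have hij : i < j := by omega
          have hj3 : j < 3 * r := by
            by_contra hc
            push_neg at hc
            have := aux_choose_two_mono hc
            omega
          have hwm : w = 3 * r + (j.choose 2 + i) := by omega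
          have hap : φ w =
              (if j < r then g1 (r + (j.choose 2 + i))
               else if j < 2 * r then
                 if i < r then f3 (i * r + (j - r))
                 else g2 (r + ((j - r).choose 2 + (i - r)))
               else
                 if i < r then f2 (i * r + (j - 2 * r))
                 else if i < 2 * r then f1 ((i - r) * r + (j - 2 * r))
                 else g3 (r + ((j - 2 * r).choose 2 + (i - 2 * r)))) := by
            rw [hφ, hwm]
            exact auxPhi_apex r g1 g2 g3 f1 f2 f3 hij
          by_cases hc1 : j < r
          · rw [if_pos hc1] at hap
            refine Or.inl ⟨r + (j.choose 2 + i), ?_, hap, ?_⟩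
            · have := aux_choose_two_mono (show j + 1 ≤ r by omega)
              omega
            · rw [if_neg (by omega)]
              omega
          · by_cases hc2 : j < 2 * r
            · rw [if_neg hc1, if_pos hc2] at hap
              by_cases hc3 : i < r
              · rw [if_pos hc3] at hap
                refine Or.inr (Or.inr (Or.inr (Or.inr (Or.inr
                  ⟨i * r + (j - r), hbound i (j - r) hc3 (by omega), hap, ?_⟩))))
                rw [aux_base_mod (show j - r < r by omega),
                  aux_base_div (show j - r < r by omega),
                  show r + (j - r) = j from by omega]
                omega
              · rw [if_neg hc3] at hap
                refine Or.inr (Or.inl ⟨r + ((j - r).choose 2 + (i - r)), ?_, hap, ?_⟩)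
                · have e1 := aux_choose_two_succ (j - r)
                  have e2 := aux_choose_two_mono (show (j - r) + 1 ≤ r by omega)
                  omega
                · rw [if_neg (by omega),
                    show r + ((j - r).choose 2 + (i - r)) - r = (j - r).choose 2 + (i - r) from by omega,
                    decJ_encode (show i - r < j - r by omega),
                    show j - r + r = j from by omega]
                  omega
            · rw [if_neg hc1, if_neg hc2] at hap
              by_cases hc3 : i < r
              · rw [if_pos hc3] at hap
                refine Or.inr (Or.inr (Or.inr (Or.inr (Or.inl
                  ⟨i * r + (j - 2 * r), hbound i (j - 2 * r) hc3 (by omega), hap, ?_⟩))))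
                rw [aux_base_mod (show j - 2 * r < r by omega),
                  aux_base_div (show j - 2 * r < r by omega),
                  show 2 * r + (j - 2 * r) = j from by omega]
                omega
              · by_cases hc4 : i < 2 * r
                · rw [if_neg hc3, if_pos hc4] at hap
                  refine Or.inr (Or.inr (Or.inr (Or.inl
                    ⟨(i - r) * r + (j - 2 * r),
                      hbound (i - r) (j - 2 * r) (by omega) (by omega), hap, ?_⟩)))
                  rw [aux_base_mod (show j - 2 * r < r by omega),
                    aux_base_div (show j - 2 * r < r by omega),
                    show 2 * r + (j - 2 * r) = j from by omega]
                  omega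
                · rw [if_neg hc3, if_neg hc4] at hap
                  refine Or.inr (Or.inr (Or.inl
                    ⟨r + ((j - 2 * r).choose 2 + (i - 2 * r)), ?_, hap, ?_⟩))
                  · have e1 := aux_choose_two_succ (j - 2 * r)
                    have e2 := aux_choose_two_mono (show (j - 2 * r) + 1 ≤ r by omega)
                    omega
                  · rw [if_neg (by omega),
                      show r + ((j - 2 * r).choose 2 + (i - 2 * r)) - r = (j - 2 * r).choose 2 + (i - 2 * r) from by omega,
                      decJ_encode (show i - 2 * r < j - 2 * r by omega),
                      show j - 2 * r + 2 * r = j from by omega]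
                    omega
  refine ⟨Finset.image φ (linClique (3 * r)).verts,
    Finset.image (fun e => e.image φ) (linClique (3 * r)).edges,
    ⟨φ, ?_, rfl, rfl⟩, ?_⟩
  · -- injectivity
    intro u hu v hv huv
    have hu' : u < 3 * r + (3 * r).choose 2 := by
      simpa [linClique] using hu
    have hv' : v < 3 * r + (3 * r).choose 2 := by
      simpa [linClique] using hv
    rcases key u hu' with ⟨a,ha,hpu,hru⟩|⟨a,ha,hpu,hru⟩|⟨a,ha,hpu,hru⟩|⟨a,ha,hpu,hru⟩|⟨a,ha,hpu,hru⟩|⟨a,ha,hpu,hru⟩ <;>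
      rcases key v hv' with ⟨b,hb,hpv,hrv⟩|⟨b,hb,hpv,hrv⟩|⟨b,hb,hpv,hrv⟩|⟨b,hb,hpv,hrv⟩|⟨b,hb,hpv,hrv⟩|⟨b,hb,hpv,hrv⟩ <;>
      rw [hpu, hpv] at huv
    · have hab : a = b := hinj1 (hmv a ha) (hmv b hb) huv
      rw [hru, hrv, hab]
    · have hx := hGV1 a ha
      rw [huv] at hx
      exact absurd (hGV2 b hb) (Finset.disjoint_left.mp hd12 hx)
    · have hx := hGV1 a ha
      rw [huv] at hx
      exact absurd (hGV3 b hb) (Finset.disjoint_left.mp hd13 hx)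
    · have hx := hG1 a ha
      rw [huv] at hx
      exact absurd hx (hF1n b hb)
    · have hx := hGV1 a ha
      rw [huv] at hx
      exact absurd (hFV2 b hb) (Finset.disjoint_left.mp hd12 hx)
    · have hx := hGV1 a ha
      rw [huv] at hx
      exact absurd (hFV3 b hb) (Finset.disjoint_left.mp hd13 hx)
    · have hx := hGV2 a ha
      rw [huv] at hx
      exact absurd (hGV1 b hb) (Finset.disjoint_left.mp hd12.symm hx)
    · have hab : a = b := hinj2 (hmv a ha) (hmv b hb) huv
      rw [hru, hrv, hab]
    · have hx := hGV2 a ha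
      rw [huv] at hx
      exact absurd (hGV3 b hb) (Finset.disjoint_left.mp hd23 hx)
    · have hx := hGV2 a ha
      rw [huv] at hx
      exact absurd (hFV1 b hb) (Finset.disjoint_left.mp hd12.symm hx)
    · have hx := hG2 a ha
      rw [huv] at hx
      exact absurd hx (hF2n b hb)
    · have hx := hGV2 a ha
      rw [huv] at hx
      exact absurd (hFV3 b hb) (Finset.disjoint_left.mp hd23 hx)
    · have hx := hGV3 a ha
      rw [huv] at hx
      exact absurd (hGV1 b hb) (Finset.disjoint_left.mp hd13.symm hx)
    · have hx := hGV3 a ha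
      rw [huv] at hx
      exact absurd (hGV2 b hb) (Finset.disjoint_left.mp hd23.symm hx)
    · have hab : a = b := hinj3 (hmv a ha) (hmv b hb) huv
      rw [hru, hrv, hab]
    · have hx := hGV3 a ha
      rw [huv] at hx
      exact absurd (hFV1 b hb) (Finset.disjoint_left.mp hd13.symm hx)
    · have hx := hGV3 a ha
      rw [huv] at hx
      exact absurd (hFV2 b hb) (Finset.disjoint_left.mp hd23.symm hx)
    · have hx := hG3 a ha
      rw [huv] at hx
      exact absurd hx (hF3n b hb)
    · have hx := hG1 b hb
      rw [← huv] at hx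
      exact absurd hx (hF1n a ha)
    · have hx := hFV1 a ha
      rw [huv] at hx
      exact absurd (hGV2 b hb) (Finset.disjoint_left.mp hd12 hx)
    · have hx := hFV1 a ha
      rw [huv] at hx
      exact absurd (hGV3 b hb) (Finset.disjoint_left.mp hd13 hx)
    · have hab : a = b := hF1inj a ha b hb huv
      rw [hru, hrv, hab]
    · have hx := hFV1 a ha
      rw [huv] at hx
      exact absurd (hFV2 b hb) (Finset.disjoint_left.mp hd12 hx)
    · have hx := hFV1 a ha
      rw [huv] at hx
      exact absurd (hFV3 b hb) (Finset.disjoint_left.mp hd13 hx)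
    · have hx := hFV2 a ha
      rw [huv] at hx
      exact absurd (hGV1 b hb) (Finset.disjoint_left.mp hd12.symm hx)
    · have hx := hG2 b hb
      rw [← huv] at hx
      exact absurd hx (hF2n a ha)
    · have hx := hFV2 a ha
      rw [huv] at hx
      exact absurd (hGV3 b hb) (Finset.disjoint_left.mp hd23 hx)
    · have hx := hFV2 a ha
      rw [huv] at hx
      exact absurd (hFV1 b hb) (Finset.disjoint_left.mp hd12.symm hx)
    · have hab : a = b := hF2inj a ha b hb huv
      rw [hru, hrv, hab]
    · have hx := hFV2 a ha
      rw [huv] at hx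
      exact absurd (hFV3 b hb) (Finset.disjoint_left.mp hd23 hx)
    · have hx := hFV3 a ha
      rw [huv] at hx
      exact absurd (hGV1 b hb) (Finset.disjoint_left.mp hd13.symm hx)
    · have hx := hFV3 a ha
      rw [huv] at hx
      exact absurd (hGV2 b hb) (Finset.disjoint_left.mp hd23.symm hx)
    · have hx := hG3 b hb
      rw [← huv] at hx
      exact absurd hx (hF3n a ha)
    · have hx := hFV3 a ha
      rw [huv] at hx
      exact absurd (hFV1 b hb) (Finset.disjoint_left.mp hd13.symm hx)
    · have hx := hFV3 a ha
      rw [huv] at hx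
      exact absurd (hFV2 b hb) (Finset.disjoint_left.mp hd23.symm hx)
    · have hab : a = b := hF3inj a ha b hb huv
      rw [hru, hrv, hab]
  · -- edges land in the host
    have hT : ∀ x ∈ V1, ∀ y ∈ V2, ∀ z ∈ V3,
        ({x, y, z} : Finset ℕ) ∈ tripartiteEdges V1 V2 V3 := by
      intro x hx y hy z hz
      unfold tripartiteEdges
      rw [Finset.mem_image]
      exact ⟨(x, y, z), by simp [Finset.mem_product, hx, hy, hz], rfl⟩
    have hT2 : ∀ x ∈ V1, ∀ z ∈ V3, ∀ y ∈ V2,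
        ({x, z, y} : Finset ℕ) ∈ tripartiteEdges V1 V2 V3 := by
      intro x hx z hz y hy
      unfold tripartiteEdges
      rw [Finset.mem_image]
      exact ⟨(x, y, z), by simp [Finset.mem_product, hx, hy, hz],
        by ext w; simp; tauto⟩
    have hT3 : ∀ y ∈ V2, ∀ z ∈ V3, ∀ x ∈ V1,
        ({y, z, x} : Finset ℕ) ∈ tripartiteEdges V1 V2 V3 := by
      intro y hy z hz x hx
      unfold tripartiteEdges
      rw [Finset.mem_image]
      exact ⟨(x, y, z), by simp [Finset.mem_product, hx, hy, hz],
        by ext w; simp; tauto⟩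
    have hcE : ∀ (g : ℕ → ℕ) (cE : Finset (Finset ℕ)),
        cE = (linClique r).edges.image (fun e => e.image g) →
        ∀ a b : ℕ, a < b → b < r →
        ({g a, g b, g (r + (b.choose 2 + a))} : Finset ℕ) ∈ cE := by
      intro g cE hE a b hab hb
      rw [hE, Finset.mem_image]
      refine ⟨{a, b, r + (b.choose 2 + a)}, ?_, ?_⟩
      · rw [show (linClique r).edges =
          ((Finset.range r ×ˢ Finset.range r).filter fun p => p.1 < p.2).image
            (fun p => {p.1, p.2, r + (p.2.choose 2 + p.1)}) from rfl,
          Finset.mem_image]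
        refine ⟨(a, b), ?_, rfl⟩
        rw [Finset.mem_filter, Finset.mem_product, Finset.mem_range, Finset.mem_range]
        exact ⟨⟨by omega, hb⟩, hab⟩
      · rw [Finset.image_insert, Finset.image_insert, Finset.image_singleton]
    intro e he
    rw [Finset.mem_image] at he
    obtain ⟨e0, he0, rfl⟩ := he
    rw [show (linClique (3 * r)).edges =
        ((Finset.range (3 * r) ×ˢ Finset.range (3 * r)).filter fun p => p.1 < p.2).image
          (fun p => {p.1, p.2, 3 * r + (p.2.choose 2 + p.1)}) from rfl,
      Finset.mem_image] at he0
    obtain ⟨p, hp, rfl⟩ := he0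
    obtain ⟨a, b⟩ := p
    rw [Finset.mem_filter, Finset.mem_product, Finset.mem_range, Finset.mem_range] at hp
    obtain ⟨⟨hpa, hpb⟩, hab⟩ := hp
    rw [Finset.image_insert, Finset.image_insert, Finset.image_singleton]
    have hap : φ (3 * r + (b.choose 2 + a)) =
        (if b < r then g1 (r + (b.choose 2 + a))
         else if b < 2 * r then
           if a < r then f3 (a * r + (b - r))
           else g2 (r + ((b - r).choose 2 + (a - r)))
         else
           if a < r then f2 (a * r + (b - 2 * r))
           else if a < 2 * r then f1 ((a - r) * r + (b - 2 * r))
           else g3 (r + ((b - 2 * r).choose 2 + (a - 2 * r)))) := by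
      rw [hφ]
      exact auxPhi_apex r g1 g2 g3 f1 f2 f3 hab
    by_cases hb1 : b < r
    · have e1 : φ a = g1 a := by
        rw [hφ]; exact auxPhi_b1 _ _ _ _ _ _ _ (by omega)
      have e2 : φ b = g1 b := by
        rw [hφ]; exact auxPhi_b1 _ _ _ _ _ _ _ hb1
      rw [if_pos hb1] at hap
      rw [e1, e2, hap]
      exact Finset.mem_union_left _ (Finset.mem_union_left _ (Finset.mem_union_right _
        (hcE g1 cE1 hE1c a b hab hb1)))
    · by_cases hb2 : b < 2 * r
      · have e2 : φ b = g2 (b - r) := by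
          rw [hφ]; exact auxPhi_b2 _ _ _ _ _ _ _ (by omega) hb2
        rw [if_neg hb1, if_pos hb2] at hap
        by_cases ha1 : a < r
        · have e1 : φ a = g1 a := by
            rw [hφ]; exact auxPhi_b1 _ _ _ _ _ _ _ ha1
          rw [if_pos ha1] at hap
          rw [e1, e2, hap]
          refine Finset.mem_union_left _ (Finset.mem_union_left _ (Finset.mem_union_left _
            (hT _ (hGV1 a (by omega)) _ (hGV2 (b - r) (by omega)) _
              (hFV3 _ (hbound a (b - r) ha1 (by omega))))))
        · have e1 : φ a = g2 (a - r) := by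
            rw [hφ]; exact auxPhi_b2 _ _ _ _ _ _ _ (by omega) (by omega)
          rw [if_neg ha1] at hap
          rw [e1, e2, hap]
          exact Finset.mem_union_left _ (Finset.mem_union_right _
            (hcE g2 cE2 hE2c (a - r) (b - r) (by omega) (by omega)))
      · have e2 : φ b = g3 (b - 2 * r) := by
          rw [hφ]; exact auxPhi_b3 _ _ _ _ _ _ _ (by omega) (by omega)
        rw [if_neg hb1, if_neg hb2] at hap
        by_cases ha1 : a < r
        · have e1 : φ a = g1 a := by
            rw [hφ]; exact auxPhi_b1 _ _ _ _ _ _ _ ha1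
          rw [if_pos ha1] at hap
          rw [e1, e2, hap]
          refine Finset.mem_union_left _ (Finset.mem_union_left _ (Finset.mem_union_left _
            (hT2 _ (hGV1 a (by omega)) _ (hGV3 (b - 2 * r) (by omega)) _
              (hFV2 _ (hbound a (b - 2 * r) ha1 (by omega))))))
        · by_cases ha2 : a < 2 * r
          · have e1 : φ a = g2 (a - r) := by
              rw [hφ]; exact auxPhi_b2 _ _ _ _ _ _ _ (by omega) ha2
            rw [if_neg ha1, if_pos ha2] at hap
            rw [e1, e2, hap]
            refine Finset.mem_union_left _ (Finset.mem_union_left _ (Finset.mem_union_left _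
              (hT3 _ (hGV2 (a - r) (by omega)) _ (hGV3 (b - 2 * r) (by omega)) _
                (hFV1 _ (hbound (a - r) (b - 2 * r) (by omega) (by omega))))))
          · have e1 : φ a = g3 (a - 2 * r) := by
              rw [hφ]; exact auxPhi_b3 _ _ _ _ _ _ _ (by omega) (by omega)
            rw [if_neg ha1, if_neg ha2] at hap
            rw [e1, e2, hap]
            exact Finset.mem_union_right _
              (hcE g3 cE3 hE3c (a - 2 * r) (b - 2 * r) (by omega) (by omega))
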